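/- Assume q2 < p13/(p13+p23) and let x be a real number with q1·(1−q2)·p13 ≤ x < q1·(1−q2)·(p13 + (1−p13)·p12). Set p* := (x − q1·(1−q2)·p13)/(q1·(1−q2)·(1−p13)·p12). Then the feasible set F := { p ∈ [0,1] : x < q1·(1−q2)·(p13 + (1−p13)·p12·p) } equals the half-open interval (p*, 1], and the supremum over p ∈ F of y2(p, x) equals q2·p23·(1−q1) + q1·(1−q2)·p13 − x (this value equals y2(p*, x) and is not attained on F). -/

import Mathlib

set_option maxHeartbeats 1000000 in
/-- Assume `q2 < p13/(p13+p23)` and let `x` satisfy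
`q1·(1−q2)·p13 ≤ x < q1·(1−q2)·(p13 + (1−p13)·p12)`. Set
`p* := (x − q1·(1−q2)·p13)/(q1·(1−q2)·(1−p13)·p12)`. Then the feasible set
`F := { p ∈ [0,1] : x < q1·(1−q2)·(p13 + (1−p13)·p12·p) }` equals `(p*, 1]`, and
the supremum over `p ∈ F` of `y2(p, x)` equals
`q2·p23·(1−q1) + q1·(1−q2)·p13 − x`; this value equals `y2(p*, x)` and is not
attained on `F`. -/
theorem stmt_6 (q1 q2 p12 p13 p23 : ℝ)
    (hq1 : 0 < q1) (hq1' : q1 < 1) (hq2 : 0 < q2) (hq2' : q2 < 1)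
    (hp12 : 0 < p12) (hp12' : p12 ≤ 1) (hp13 : 0 < p13) (hp13' : p13 < 1)
    (hp23 : 0 < p23) (hp23' : p23 ≤ 1) (hp : p13 < p23)
    (y2 : ℝ → ℝ → ℝ)
    (hy2 : ∀ p x, y2 p x =
      q2 * p23 - ((1 - q2) * p12 * (1 - p13) * p + q2 * p23) * x /
        ((1 - q2) * (p13 + (1 - p13) * p12 * p)))
    (hq : q2 < p13 / (p13 + p23))
    (x : ℝ) (hx0 : q1 * (1 - q2) * p13 ≤ x)
    (hx1 : x < q1 * (1 - q2) * (p13 + (1 - p13) * p12))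
    (pstar : ℝ)
    (hpstar : pstar = (x - q1 * (1 - q2) * p13) / (q1 * (1 - q2) * (1 - p13) * p12))
    (F : Set ℝ)
    (hF : F = {p ∈ Set.Icc (0:ℝ) 1 | x < q1 * (1 - q2) * (p13 + (1 - p13) * p12 * p)}) :
    F = Set.Ioc pstar 1 ∧
    sSup ((fun p => y2 p x) '' F) = q2 * p23 * (1 - q1) + q1 * (1 - q2) * p13 - x ∧
    y2 pstar x = q2 * p23 * (1 - q1) + q1 * (1 - q2) * p13 - x ∧
    (∀ p ∈ F, y2 p x < q2 * p23 * (1 - q1) + q1 * (1 - q2) * p13 - x) := by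
  have hq2c : (0:ℝ) < 1 - q2 := by linarith
  have hA : 0 < q1 * (1 - q2) := mul_pos hq1 hq2c
  have hC : 0 < (1 - p13) * p12 := mul_pos (by linarith) hp12
  have hAC : 0 < q1 * (1 - q2) * ((1 - p13) * p12) := mul_pos hA hC
  have hxpos : 0 < x := lt_of_lt_of_le (mul_pos hA hp13) hx0
  -- K = q2*p23 - (1-q2)*p13 < 0
  have hK : q2 * p23 - (1 - q2) * p13 < 0 := by
    have h13 : 0 < p13 + p23 := by linarith
    rw [lt_div_iff₀ h13] at hq
    nlinarith
  -- pstar basic facts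
  have hne : q1 * (1 - q2) * (1 - p13) * p12 ≠ 0 := by
    have : 0 < q1 * (1 - q2) * (1 - p13) * p12 := by nlinarith
    exact ne_of_gt this
  have hps : q1 * (1 - q2) * ((1 - p13) * p12) * pstar = x - q1 * (1 - q2) * p13 := by
    have h1p13 : (1:ℝ) - p13 ≠ 0 := (by linarith : (0:ℝ) < 1 - p13).ne'
    rw [hpstar]; field_simp
  have hps0 : 0 ≤ pstar := by
    rw [hpstar]
    apply div_nonneg (by linarith) (by nlinarith)
  have hps1 : pstar < 1 := by
    nlinarith [hps]
  -- denominator at pstar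
  have hden : p13 + (1 - p13) * p12 * pstar = x / (q1 * (1 - q2)) := by
    field_simp
    nlinarith [hps]
  -- F = Ioc pstar 1
  have hFeq : F = Set.Ioc pstar 1 := by
    rw [hF]
    ext p
    simp only [Set.mem_setOf_eq, Set.mem_Icc, Set.mem_Ioc]
    constructor
    · rintro ⟨⟨h0, h1⟩, h2⟩
      refine ⟨?_, h1⟩
      rw [hpstar, div_lt_iff₀ (by nlinarith)]
      nlinarith
    · rintro ⟨h1, h2⟩
      have hp0 : 0 ≤ p := le_trans hps0 h1.le
      refine ⟨⟨hp0, h2⟩, ?_⟩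
      have h3 := mul_lt_mul_of_pos_left h1 hAC
      have h4 : q1 * (1 - q2) * (p13 + (1 - p13) * p12 * p)
          = q1 * (1 - q2) * p13 + q1 * (1 - q2) * ((1 - p13) * p12) * p := by ring
      linarith
  -- main strict bound: ∀ p ∈ F, y2 p x < M
  have hbound : ∀ p ∈ F, y2 p x < q2 * p23 * (1 - q1) + q1 * (1 - q2) * p13 - x := by
    intro p hpF
    rw [hF] at hpF
    obtain ⟨⟨hp0, hp1⟩, hpx⟩ := hpF
    have hD : 0 < (1 - q2) * (p13 + (1 - p13) * p12 * p) := by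
      apply mul_pos hq2c
      have : 0 ≤ (1 - p13) * p12 * p := by positivity
      linarith
    rw [hy2]
    have hlt : q2 * p23 - (q2 * p23 * (1 - q1) + q1 * (1 - q2) * p13 - x) <
        ((1 - q2) * p12 * (1 - p13) * p + q2 * p23) * x /
          ((1 - q2) * (p13 + (1 - p13) * p12 * p)) := by
      rw [lt_div_iff₀ hD]
      have hid : ((1 - q2) * p12 * (1 - p13) * p + q2 * p23) * x -
          (q2 * p23 - (q2 * p23 * (1 - q1) + q1 * (1 - q2) * p13 - x)) *
            ((1 - q2) * (p13 + (1 - p13) * p12 * p))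
          = (-(q2 * p23 - (1 - q2) * p13)) *
              (q1 * (1 - q2) * (p13 + (1 - p13) * p12 * p) - x) := by ring
      have hpos : 0 < (-(q2 * p23 - (1 - q2) * p13)) *
          (q1 * (1 - q2) * (p13 + (1 - p13) * p12 * p) - x) :=
        mul_pos (by linarith) (by linarith)
      linarith
    linarith
  -- value at pstar
  have hDps : (1 - q2) * (p13 + (1 - p13) * p12 * pstar) ≠ 0 := by
    rw [hden]
    positivity
  have hval : y2 pstar x = q2 * p23 * (1 - q1) + q1 * (1 - q2) * p13 - x := by
    rw [hy2]
    have hN : ((1 - q2) * p12 * (1 - p13) * pstar + q2 * p23) * x /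
        ((1 - q2) * (p13 + (1 - p13) * p12 * pstar))
        = q2 * p23 - (q2 * p23 * (1 - q1) + q1 * (1 - q2) * p13 - x) := by
      rw [div_eq_iff hDps]
      linear_combination (-(q2 * p23 - (1 - q2) * p13)) * hps
    rw [hN]; ring
  refine ⟨hFeq, ?_, hval, hbound⟩
  -- the supremum
  apply csSup_eq_of_forall_le_of_forall_lt_exists_gt
  · refine ⟨y2 1 x, 1, ?_, rfl⟩
    rw [hFeq]; exact ⟨hps1, le_refl 1⟩
  · rintro a ⟨p, hpF, rfl⟩
    exact (hbound p hpF).le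
  · intro w hw
    -- continuity of p ↦ y2 p x at pstar
    have hcont : ContinuousAt (fun p => y2 p x) pstar := by
      have : ContinuousAt (fun p => q2 * p23 - ((1 - q2) * p12 * (1 - p13) * p + q2 * p23) * x /
          ((1 - q2) * (p13 + (1 - p13) * p12 * p))) pstar := by
        apply ContinuousAt.sub continuousAt_const
        apply ContinuousAt.div
        · fun_prop
        · fun_prop
        · exact hDps
      convert this using 2 with p
      rw [hy2]
    have hev : ∀ᶠ p in nhds pstar, w < y2 p x := by
      have : w < y2 pstar x := by rw [hval]; exact hw
      exact hcont.eventually (eventually_gt_nhds this)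
    have hev2 : ∀ᶠ p in nhdsWithin pstar (Set.Ioi pstar), w < y2 p x :=
      hev.filter_mono nhdsWithin_le_nhds
    have hmem : Set.Ioc pstar 1 ∈ nhdsWithin pstar (Set.Ioi pstar) :=
      Ioc_mem_nhdsGT_of_mem ⟨le_refl _, hps1⟩
    have : ∀ᶠ p in nhdsWithin pstar (Set.Ioi pstar), w < y2 p x ∧ p ∈ Set.Ioc pstar 1 :=
      hev2.and hmem
    obtain ⟨p, hpw, hpI⟩ := this.exists
    exact ⟨y2 p x, ⟨p, by rw [hFeq]; exact hpI, rfl⟩, hpw⟩
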